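/- Fix α > 0 and let f be the function determined by 1/f(z) = (1/(2π))·[ log((z+α)/z) + (2π−α)/(z+α) ] for z in the upper half-plane, extended continuously to the real axis near 0 from above, and write f(x) = u(x) + i·v(x) for real x < 0 near 0. Then v(x) = 2π²/log²|x| + O(1/log³|x|) as x → 0⁻. -/

import Mathlib

open Complex Filter Topology

/-- The Christoffel–Schwarz map `f` of the paper:
`1/f(z) = (1/(2π))·[log(z+α) − log z + (2π−α)/(z+α)]`, where `Complex.log`
is the branch with `log i = iπ/2` (the continuous extension to the real axis from above,
with `log((z+α)/z) = log(z+α) − log z` on the upper half-plane). -/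
noncomputable def fCS (α : ℝ) (z : ℂ) : ℂ :=
  2 * (Real.pi : ℂ) /
    (Complex.log (z + (α : ℂ)) - Complex.log z + ((2 * Real.pi - α : ℝ) : ℂ) / (z + (α : ℂ)))

lemma fCS_im_eq (α x : ℝ) (hx : x < 0) (hxα : 0 < x + α) :
    (fCS α (x:ℂ)).im = 2 * Real.pi ^ 2 /
      ((Real.log (x+α) + (2*Real.pi - α)/(x+α) - Real.log |x|)^2 + Real.pi^2) := by
  have h1 : Complex.log ((x:ℂ) + (α:ℂ)) = (Real.log (x+α) : ℂ) := by
    rw [← Complex.ofReal_add, Complex.ofReal_log hxα.le]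
  have h2 : Complex.log (x:ℂ) = (Real.log |x| : ℂ) + Real.pi * Complex.I := by
    rw [Complex.log]
    simp [Complex.arg_ofReal_of_neg hx, Complex.norm_real]
  have h3 : ((2 * Real.pi - α : ℝ) : ℂ) / ((x:ℂ) + (α:ℂ)) = (((2*Real.pi - α)/(x+α) : ℝ) : ℂ) := by
    push_cast; ring
  set A : ℝ := Real.log (x+α) + (2*Real.pi - α)/(x+α) - Real.log |x| with hA
  have hD : Complex.log ((x:ℂ) + (α:ℂ)) - Complex.log (x:ℂ) + ((2 * Real.pi - α : ℝ) : ℂ) / ((x:ℂ) + (α:ℂ))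
      = (A : ℂ) - Real.pi * Complex.I := by
    rw [h1, h2, h3, hA]; push_cast; ring
  rw [fCS, hD, Complex.div_im]
  simp [Complex.normSq_apply]
  ring

lemma key_bound (L B C₀ : ℝ) (hB : |B| ≤ C₀) (hC₀ : 1 ≤ C₀) (hL : 2*C₀ ≤ |L|) :
    |2*Real.pi^2/((B-L)^2+Real.pi^2) - 2*Real.pi^2/L^2|
      ≤ 8*Real.pi^2*(3*C₀+Real.pi^2) * |1/L^3| := by
  set π := Real.pi with hπdef
  have hπ := Real.pi_pos
  have hL1 : (1:ℝ) ≤ |L| := by linarith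
  have hL0 : (0:ℝ) < |L| := by linarith
  have hLne : L ≠ 0 := abs_pos.mp hL0
  set A := B - L with hAdef
  have hden : 0 < A^2 + π^2 := by positivity
  have key : 2*π^2/(A^2+π^2) - 2*π^2/L^2 = 2*π^2*(L^2 - A^2 - π^2)/((A^2+π^2)*L^2) := by
    field_simp; ring
  have hnum : |L^2 - A^2 - π^2| ≤ (3*C₀+π^2)*|L| := by
    have h1 : |L^2 - A^2| = |2*L - B| * |B| := by
      rw [← abs_mul]; congr 1; rw [hAdef]; ring
    have h2 : |2*L - B| ≤ 2*|L| + C₀ := by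
      calc |2*L - B| ≤ |2*L| + |B| := abs_sub _ _
        _ ≤ 2*|L| + C₀ := by rw [abs_mul]; simp; linarith
    have hB0 : 0 ≤ |B| := abs_nonneg _
    calc |L^2 - A^2 - π^2| ≤ |L^2 - A^2| + π^2 := by
          have := abs_sub (L^2 - A^2) (π^2 : ℝ)
          simpa [_root_.abs_of_nonneg (sq_nonneg π)] using this
      _ ≤ (2*|L| + C₀) * C₀ + π^2 := by
          rw [h1]; nlinarith
      _ ≤ (3*C₀+π^2)*|L| := by nlinarith
  have hAbig : L^2/4 ≤ A^2 + π^2 := by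
    have h1 : |L| - |B| ≤ |A| := by
      have := abs_sub_abs_le_abs_sub L B
      have h2 : |L - B| = |A| := by rw [hAdef, abs_sub_comm]
      linarith
    have h3 : |L|/2 ≤ |A| := by linarith
    have h4 : A^2 = |A|^2 := (_root_.sq_abs A).symm
    have h5 : L^2 = |L|^2 := (_root_.sq_abs L).symm
    have h7 : (|L|/2)^2 ≤ |A|^2 := pow_le_pow_left₀ (by positivity) h3 2
    have h8 : (|L|/2)^2 = L^2/4 := by rw [div_pow, _root_.sq_abs]; norm_num
    calc L^2/4 = (|L|/2)^2 := h8.symm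
      _ ≤ |A|^2 := h7
      _ = A^2 := h4.symm
      _ ≤ A^2 + π^2 := le_add_of_nonneg_right (sq_nonneg π)
  rw [key, abs_div, abs_of_pos (by positivity : (0:ℝ) < (A^2+π^2)*L^2), abs_mul,
    abs_of_pos (by positivity : (0:ℝ) < 2*π^2)]
  calc 2*π^2 * |L^2 - A^2 - π^2| / ((A^2+π^2)*L^2)
      ≤ 2*π^2 * ((3*C₀+π^2)*|L|) / ((L^2/4)*L^2) := by
        apply div_le_div₀ (by positivity) (by nlinarith [abs_nonneg (L^2-A^2-π^2)]) (by positivity)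
        nlinarith [sq_nonneg L]
    _ = 8*π^2*(3*C₀+π^2) * |1/L^3| := by
        rw [abs_div, abs_one, _root_.abs_pow]
        field_simp
        rw [show |L|^4 = (|L|^2)^2 by ring, _root_.sq_abs L]; ring

/-- `v(x) = 2π²/log²|x| + O(1/log³|x|)` as `x → 0⁻`. -/
theorem stmt5 (α : ℝ) (hα : 0 < α) :
    (fun x : ℝ => (fCS α (x : ℂ)).im - 2 * Real.pi ^ 2 / (Real.log |x|) ^ 2)
      =O[nhdsWithin 0 (Set.Iio (0 : ℝ))] (fun x : ℝ => 1 / (Real.log |x|) ^ 3) := by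
  set B : ℝ → ℝ := fun x => Real.log (x+α) + (2*Real.pi-α)/(x+α) with hBdef
  have hBc : ContinuousAt B 0 := by
    apply ContinuousAt.add
    · exact (Real.continuousAt_log (by simpa using hα.ne')).comp (by fun_prop)
    · exact ContinuousAt.div (by fun_prop) (by fun_prop) (by simpa using hα.ne')
  set C₀ : ℝ := |B 0| + 1 with hC₀def
  have hC₀ : (1:ℝ) ≤ C₀ := by rw [hC₀def]; linarith [abs_nonneg (B 0)]
  -- eventually |B x| ≤ C₀
  have hBev : ∀ᶠ x in nhdsWithin (0:ℝ) (Set.Iio 0), |B x| ≤ C₀ := by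
    have h : Tendsto (fun x => |B x|) (𝓝 (0:ℝ)) (𝓝 |B 0|) :=
      (continuous_abs.continuousAt.comp hBc)
    have h2 : ∀ᶠ x in 𝓝 (0:ℝ), |B x| ≤ C₀ :=
      (h.eventually_lt_const (by rw [hC₀def]; linarith)).mono fun x hx => hx.le
    exact h2.filter_mono nhdsWithin_le_nhds
  -- eventually -α < x
  have hαev : ∀ᶠ x in nhdsWithin (0:ℝ) (Set.Iio 0), -α < x := by
    have : ∀ᶠ x in 𝓝 (0:ℝ), -α < x := eventually_gt_nhds (by linarith)
    exact this.filter_mono nhdsWithin_le_nhds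
  -- L tends to -∞
  have habs : Tendsto (fun x:ℝ => |x|) (𝓝[<] (0:ℝ)) (𝓝[>] (0:ℝ)) := by
    apply tendsto_nhdsWithin_of_tendsto_nhds_of_eventually_within
    · exact (continuous_abs.tendsto' 0 0 abs_zero).mono_left nhdsWithin_le_nhds
    · filter_upwards [self_mem_nhdsWithin] with x hx
      exact Set.mem_Ioi.mpr (abs_pos.mpr (ne_of_lt (Set.mem_Iio.mp hx)))
  have hLt : Tendsto (fun x:ℝ => Real.log |x|) (𝓝[<] (0:ℝ)) atBot :=
    Real.tendsto_log_nhdsGT_zero.comp habs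
  have hLev : ∀ᶠ x in nhdsWithin (0:ℝ) (Set.Iio 0), Real.log |x| ≤ -(2*C₀) :=
    hLt.eventually_le_atBot _
  apply Asymptotics.IsBigO.of_bound (8*Real.pi^2*(3*C₀+Real.pi^2))
  filter_upwards [hBev, hαev, hLev, self_mem_nhdsWithin] with x hB hxα hL hx0
  have hx0' : x < 0 := Set.mem_Iio.mp hx0
  have hxα' : 0 < x + α := by linarith
  have him := fCS_im_eq α x hx0' hxα'
  have habsL : 2*C₀ ≤ |(Real.log |x|)| := by
    have := neg_le_abs (Real.log |x|)
    linarith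
  have hk := key_bound (Real.log |x|) (B x) C₀ hB hC₀ habsL
  rw [Real.norm_eq_abs, Real.norm_eq_abs, him]
  have heq : Real.log (x+α) + (2*Real.pi - α)/(x+α) - Real.log |x|
      = B x - Real.log |x| := by rw [hBdef]
  rw [heq]
  exact hk
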